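/- For every fixed u ∈ ℝ, F_n(u) → e^{−u²/4}/√π as n → ∞. -/

import Mathlib

open Real Filter Set Topology

/-- For `n ≥ 1` and `u ≥ -√n`,
`F_n(u) = binom(2n + ⌊u√n⌋, n) · √n / 2^{2n + ⌊u√n⌋}`. -/
noncomputable def Fbin (n : ℕ) (u : ℝ) : ℝ :=
  (Nat.choose ((2 * (n : ℤ) + ⌊u * Real.sqrt n⌋).toNat) n : ℝ) * Real.sqrt n
    / (2 : ℝ) ^ ((2 * (n : ℤ) + ⌊u * Real.sqrt n⌋).toNat)

noncomputable def hfun (y : ℝ) : ℝ := if y = 0 then -1/2 else (Real.log (1+y) - y)/y^2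

lemma log_one_add_eq (y : ℝ) : Real.log (1+y) = y + y^2 * hfun y := by
  unfold hfun
  split
  · rename_i h; subst h; simp
  · rename_i h; field_simp; ring

lemma hfun_bound {y : ℝ} (hy : |y| < 1) : |hfun y + 1/2| ≤ |y| / (1 - |y|) := by
  rcases eq_or_ne y 0 with h | h
  · subst h; norm_num [hfun]
  · have h2 := Real.abs_log_sub_add_sum_range_le (x := -y) (by rwa [abs_neg]) 2
    have hsum : (∑ i ∈ Finset.range 2, (-y) ^ (i + 1) / (i + 1)) = -y + y^2/2 := by
      simp [Finset.sum_range_succ]; ring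
    rw [hsum, abs_neg] at h2
    have hlog : Real.log (1 - -y) = y + y^2 * hfun y := by
      rw [show (1 - -y) = 1 + y by ring]; exact log_one_add_eq y
    rw [hlog] at h2
    have hy2 : (0:ℝ) < y^2 := by positivity
    have key : |(-y + y^2/2) + (y + y^2*hfun y)| = y^2 * |hfun y + 1/2| := by
      rw [show (-y + y^2/2) + (y + y^2*hfun y) = y^2 * (hfun y + 1/2) by ring,
        abs_mul, abs_of_pos hy2]
    rw [key] at h2
    have h3 : y^2 * |hfun y + 1/2| ≤ y^2 * (|y| / (1 - |y|)) := by
      calc y^2 * |hfun y + 1/2| ≤ |y|^(2+1) / (1 - |y|) := h2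
        _ = y^2 * (|y| / (1 - |y|)) := by
            rw [pow_succ, sq_abs]; ring
    exact le_of_mul_le_mul_left h3 hy2

lemma hfun_tendsto : Tendsto hfun (𝓝 0) (𝓝 (-1/2)) := by
  have h1 : Tendsto (fun y : ℝ => |hfun y + 1/2|) (𝓝 0) (𝓝 0) := by
    apply squeeze_zero' (g := fun y : ℝ => |y| / (1 - |y|))
    · filter_upwards with y; exact abs_nonneg _
    · filter_upwards [eventually_abs_sub_lt 0 (show (0:ℝ) < 1 by norm_num)] with y hy
      rw [sub_zero] at hy
      exact hfun_bound hy
    · have : Tendsto (fun y : ℝ => |y| / (1 - |y|)) (𝓝 0) (𝓝 (|(0:ℝ)| / (1 - |(0:ℝ)|))) := by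
        exact (continuous_abs.tendsto 0).div
          (tendsto_const_nhds.sub (continuous_abs.tendsto 0)) (by simp)
      simpa using this
  have h2 : Tendsto (fun y : ℝ => hfun y + 1/2) (𝓝 0) (𝓝 0) :=
    tendsto_zero_iff_abs_tendsto_zero _ |>.mpr h1
  have h3 := h2.sub_const (1/2)
  norm_num at h3
  convert h3 using 2 <;> norm_num

lemma stirling_pos {n : ℕ} (hn : 1 ≤ n) : 0 < Stirling.stirlingSeq n := by
  obtain ⟨j, rfl⟩ := Nat.exists_eq_add_of_le hn
  simpa [Nat.add_comm] using Stirling.stirlingSeq'_pos j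

lemma fact_stirling {n : ℕ} (hn : 1 ≤ n) :
    (Nat.factorial n : ℝ) = Stirling.stirlingSeq n * (Real.sqrt (2*n) * ((n:ℝ)/Real.exp 1)^n) := by
  have hn0 : (0:ℝ) < n := by exact_mod_cast hn
  have h1 : (0:ℝ) < Real.sqrt (2*n) * ((n:ℝ)/Real.exp 1)^n := by positivity
  rw [Stirling.stirlingSeq]
  field_simp

lemma exp_nat_mul_log {y : ℝ} (hy : 0 < y) (M : ℕ) :
    Real.exp ((M:ℝ) * Real.log y) = y ^ M := by
  rw [Real.exp_nat_mul, Real.exp_log hy]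

lemma master_alg (Sn Sb Sm : ℝ) (n b : ℕ) (hn : (0:ℝ) < (n:ℝ)) (hb : (0:ℝ) < (b:ℝ))
    (hSn : Sn ≠ 0) (hSb : Sb ≠ 0) :
    (Sm * (Real.sqrt (2*(n+b:ℕ)) * (((n+b:ℕ):ℝ)/Real.exp 1)^(n+b))) /
      ((Sn * (Real.sqrt (2*n) * ((n:ℝ)/Real.exp 1)^n)) * (Sb * (Real.sqrt (2*b) * ((b:ℝ)/Real.exp 1)^b)))
      * Real.sqrt n / 2^(n+b)
    = (Sm / (Sn * Sb)) * (Real.sqrt (2*((n+b:ℕ):ℝ)) * Real.sqrt n / (Real.sqrt (2*n) * Real.sqrt (2*b)))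
      * ((((n+b:ℕ):ℝ)/2)^(n+b) / ((n:ℝ)^n * (b:ℝ)^b)) := by
  have he : (0:ℝ) < Real.exp 1 := Real.exp_pos 1
  have hnb : (0:ℝ) < ((n+b:ℕ):ℝ) := by push_cast; linarith
  have h1 : Real.sqrt (2*(n:ℝ)) ≠ 0 := by positivity
  have h2 : Real.sqrt (2*(b:ℝ)) ≠ 0 := by positivity
  have h3 : Real.sqrt (2*((n+b:ℕ):ℝ)) ≠ 0 := by positivity
  have h4 : ((n:ℝ))^n ≠ 0 := by positivity
  have h5 : ((b:ℝ))^b ≠ 0 := by positivity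
  have h6 : (Real.exp 1)^(n+b) ≠ 0 := by positivity
  push_cast
  rw [div_pow, div_pow, div_pow, div_pow]
  field_simp
  rw [pow_add]
  ring

/-- For every fixed `u ∈ ℝ`, `F_n(u) → e^{-u²/4}/√π` as `n → ∞`. -/
theorem Fbin_tendsto (u : ℝ) :
    Filter.Tendsto (fun n : ℕ => Fbin n u) atTop
      (nhds (Real.exp (-u ^ 2 / 4) / Real.sqrt π)) := by
  classical
  set S := Stirling.stirlingSeq with hS_def
  set m : ℕ → ℕ := fun n => (2 * (n : ℤ) + ⌊u * Real.sqrt n⌋).toNat with hm_def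
  set b : ℕ → ℕ := fun n => ((n : ℤ) + ⌊u * Real.sqrt n⌋).toNat with hb_def
  set K : ℕ → ℝ := fun n => ((⌊u * Real.sqrt n⌋ : ℤ) : ℝ) with hK_def
  set x : ℕ → ℝ := fun n => K n / n with hx_def
  set A : ℕ → ℝ := fun n => S (m n) / (S n * S (b n)) with hA_def
  set B : ℕ → ℝ := fun n =>
    Real.sqrt (2*(m n)) * Real.sqrt n / (Real.sqrt (2*n) * Real.sqrt (2*(b n))) with hB_def
  set E : ℕ → ℝ := fun n =>
    Real.exp ((m n:ℝ) * Real.log ((m n:ℝ)/2) - n * Real.log n - (b n:ℝ) * Real.log (b n))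
    with hE_def
  -- sqrt tends to atTop
  have hsqR : Tendsto Real.sqrt atTop atTop := by
    apply tendsto_atTop_atTop_of_monotone (fun a b h => Real.sqrt_le_sqrt h)
    intro c
    exact ⟨(max c 0)^2, by rw [Real.sqrt_sq (le_max_right c 0)]; exact le_max_left c 0⟩
  have hsq : Tendsto (fun n : ℕ => Real.sqrt n) atTop atTop :=
    hsqR.comp tendsto_natCast_atTop_atTop
  -- structure facts
  have hfacts : ∀ᶠ n : ℕ in atTop, 1 ≤ n ∧ (1:ℤ) ≤ (n:ℤ) + ⌊u * Real.sqrt n⌋ := by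
    filter_upwards [hsq.eventually_ge_atTop (|u| + 2), eventually_ge_atTop 1] with n h1 h2
    refine ⟨h2, ?_⟩
    have hms : Real.sqrt n * Real.sqrt n = (n:ℝ) := Real.mul_self_sqrt (Nat.cast_nonneg n)
    have hfl : u * Real.sqrt n - 1 < ((⌊u * Real.sqrt n⌋ : ℤ) : ℝ) := Int.sub_one_lt_floor _
    have h3 : (0:ℝ) < (n:ℝ) + ((⌊u * Real.sqrt n⌋:ℤ):ℝ) := by
      have hs0 : (0:ℝ) ≤ Real.sqrt n := Real.sqrt_nonneg _
      nlinarith [mul_le_mul_of_nonneg_right (neg_abs_le u) hs0,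
        mul_le_mul_of_nonneg_right (show |u| ≤ Real.sqrt n - 2 by linarith) hs0,
        abs_nonneg u]
    have h4 : (0:ℤ) < (n:ℤ) + ⌊u * Real.sqrt n⌋ := by exact_mod_cast h3
    omega
  -- eventual cast identities
  have hbZ : ∀ᶠ n : ℕ in atTop,
      (b n : ℤ) = (n:ℤ) + ⌊u * Real.sqrt n⌋ ∧ (m n : ℤ) = 2*(n:ℤ) + ⌊u * Real.sqrt n⌋
        ∧ m n = n + b n ∧ 1 ≤ b n ∧ 1 ≤ n := by
    filter_upwards [hfacts] with n ⟨h1, h2⟩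
    have hb1 : (b n : ℤ) = (n:ℤ) + ⌊u * Real.sqrt n⌋ := by
      simp only [hb_def]; exact Int.toNat_of_nonneg (by omega)
    have hm1 : (m n : ℤ) = 2*(n:ℤ) + ⌊u * Real.sqrt n⌋ := by
      simp only [hm_def]; exact Int.toNat_of_nonneg (by omega)
    refine ⟨hb1, hm1, by omega, by omega, h1⟩
  -- K / sqrt n tends to u
  have hinvsq : Tendsto (fun n : ℕ => (Real.sqrt n)⁻¹) atTop (𝓝 0) :=
    tendsto_inv_atTop_zero.comp hsq
  have hKs : Tendsto (fun n : ℕ => K n / Real.sqrt n) atTop (𝓝 u) := by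
    have hlow : Tendsto (fun n : ℕ => u - (Real.sqrt n)⁻¹) atTop (𝓝 (u - 0)) :=
      tendsto_const_nhds.sub hinvsq
    rw [sub_zero] at hlow
    apply tendsto_of_tendsto_of_tendsto_of_le_of_le' hlow tendsto_const_nhds
    · filter_upwards [hsq.eventually_ge_atTop 1] with n h1
      have hs0 : (0:ℝ) < Real.sqrt n := by linarith
      have hfl : u * Real.sqrt n - 1 < K n := Int.sub_one_lt_floor _
      have hd : (u * Real.sqrt n - 1) / Real.sqrt n ≤ K n / Real.sqrt n :=
        (div_le_div_iff_of_pos_right hs0).mpr hfl.le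
      have heq : (u * Real.sqrt n - 1) / Real.sqrt n = u - (Real.sqrt n)⁻¹ := by
        field_simp
      linarith [heq ▸ hd]
    · filter_upwards [hsq.eventually_ge_atTop 1] with n h1
      have hs0 : (0:ℝ) < Real.sqrt n := by linarith
      exact (div_le_iff₀ hs0).mpr (Int.floor_le _)
  -- x tends to 0
  have hx0 : Tendsto x atTop (𝓝 0) := by
    have h := hKs.mul hinvsq
    rw [mul_zero] at h
    apply h.congr'
    filter_upwards [eventually_ge_atTop 1] with n h1
    have hn0 : (0:ℝ) < n := by exact_mod_cast h1
    have hms : Real.sqrt n * Real.sqrt n = (n:ℝ) := Real.mul_self_sqrt (Nat.cast_nonneg n)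
    simp only [hx_def]
    rw [← div_eq_mul_inv, div_div, hms]
  -- n * x^2 tends to u^2
  have hnx2 : Tendsto (fun n : ℕ => (n:ℝ) * x n^2) atTop (𝓝 (u^2)) := by
    have h := hKs.pow 2
    apply h.congr'
    filter_upwards [eventually_ge_atTop 1] with n h1
    have hn0 : (0:ℝ) < n := by exact_mod_cast h1
    have hsq2 : Real.sqrt n ^ 2 = (n:ℝ) := Real.sq_sqrt (Nat.cast_nonneg n)
    simp only [hx_def]
    rw [div_pow, div_pow, hsq2]
    field_simp
  -- b and m tend to atTop
  have hb_top : Tendsto b atTop atTop := by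
    rw [← tendsto_natCast_atTop_iff (R := ℝ)]
    apply tendsto_atTop_mono' atTop ?_ (tendsto_atTop_add_const_right atTop (-1) hsq)
    filter_upwards [hbZ, hsq.eventually_ge_atTop (|u| + 2)] with n hn h1
    have hbR : ((b n : ℤ) : ℝ) = (n:ℝ) + K n := by
      rw [hn.1]; push_cast; ring
    have hms : Real.sqrt n * Real.sqrt n = (n:ℝ) := Real.mul_self_sqrt (Nat.cast_nonneg n)
    have hfl : u * Real.sqrt n - 1 < K n := Int.sub_one_lt_floor _
    have hs0 : (0:ℝ) ≤ Real.sqrt n := Real.sqrt_nonneg _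
    have hge : (n:ℝ) + K n ≥ Real.sqrt n - 1 := by
      nlinarith [mul_le_mul_of_nonneg_right (neg_abs_le u) hs0,
        mul_le_mul_of_nonneg_right (show |u| ≤ Real.sqrt n - 2 by linarith) hs0,
        abs_nonneg u]
    have : ((b n : ℕ) : ℝ) = ((b n : ℤ) : ℝ) := by push_cast; ring
    rw [← sub_eq_add_neg]
    rw [this, hbR]
    exact hge
  have hm_top : Tendsto m atTop atTop := by
    apply tendsto_atTop_mono' atTop ?_ tendsto_id
    filter_upwards [hbZ] with n hn
    simp only [id_eq]
    omega
  -- limit of A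
  have hπ : (0:ℝ) < Real.sqrt π := Real.sqrt_pos.mpr pi_pos
  have hS := Stirling.tendsto_stirlingSeq_sqrt_pi
  have hA : Tendsto A atTop
      (𝓝 (Real.sqrt π / (Real.sqrt π * Real.sqrt π))) := by
    rw [hA_def, hS_def]
    exact (hS.comp hm_top).div (hS.mul (hS.comp hb_top)) (by positivity)
  -- limit of B
  have hBlim : Tendsto B atTop (𝓝 1) := by
    have hr : Tendsto (fun n : ℕ => (2 + x n) / (2 * (1 + x n))) atTop
        (𝓝 ((2 + 0) / (2 * (1 + 0)))) :=
      (tendsto_const_nhds.add hx0).div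
        (tendsto_const_nhds.mul (tendsto_const_nhds.add hx0)) (by norm_num)
    norm_num at hr
    have hrs := hr.sqrt
    rw [Real.sqrt_one] at hrs
    apply hrs.congr'
    filter_upwards [hbZ, eventually_ge_atTop 1] with n hn h1
    obtain ⟨hb1, hm1, h3, h4, h5⟩ := hn
    have hn0 : (0:ℝ) < n := by exact_mod_cast h1
    have hb0 : (0:ℝ) < b n := by exact_mod_cast h4
    have hm0 : (0:ℝ) < m n := by
      have : 1 ≤ m n := by omega
      exact_mod_cast this
    have hbR : ((b n : ℕ) : ℝ) = (n:ℝ) + K n := by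
      have := congrArg (fun z : ℤ => (z:ℝ)) hb1
      push_cast at this
      rw [this]
    have hmR : ((m n : ℕ) : ℝ) = 2*(n:ℝ) + K n := by
      have := congrArg (fun z : ℤ => (z:ℝ)) hm1
      push_cast at this
      rw [this]
    have hKn : K n = x n * n := by
      simp only [hx_def]; field_simp
    simp only [hB_def]
    rw [← Real.sqrt_mul (by positivity) ((n:ℝ)), ← Real.sqrt_mul (by positivity) (2*(b n:ℝ)),
      ← Real.sqrt_div (by positivity)]
    congr 1
    have h1x : (0:ℝ) < 1 + x n := by
      have hq : (1 + x n) * (n:ℝ) = (b n : ℝ) := by rw [hbR, hKn]; ring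
      nlinarith [hb0, hn0, hq]
    rw [div_eq_div_iff (by positivity) (by positivity)]
    rw [hmR, hbR, hKn]
    ring
  -- limit of E
  have hh2 : Tendsto (fun n : ℕ => hfun (x n)) atTop (𝓝 (-1/2)) := hfun_tendsto.comp hx0
  have hh1 : Tendsto (fun n : ℕ => hfun (x n / 2)) atTop (𝓝 (-1/2)) := by
    apply hfun_tendsto.comp
    have := hx0.div_const 2
    norm_num at this
    exact this
  have hg : Tendsto (fun n : ℕ =>
      -1/2 + (2 + x n)/4 * hfun (x n / 2) - (1 + x n) * hfun (x n)) atTop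
      (𝓝 (-1/2 + (2 + 0)/4 * (-1/2) - (1 + 0) * (-1/2))) :=
    ((tendsto_const_nhds.add (((tendsto_const_nhds.add hx0).div_const 4).mul hh1)).sub
      ((tendsto_const_nhds.add hx0).mul hh2))
  have hg' : Tendsto (fun n : ℕ =>
      -1/2 + (2 + x n)/4 * hfun (x n / 2) - (1 + x n) * hfun (x n)) atTop (𝓝 (-(1/4))) := by
    convert hg using 2
    norm_num
  have hexpo : Tendsto (fun n : ℕ => (n:ℝ) * x n^2 *
      (-1/2 + (2 + x n)/4 * hfun (x n / 2) - (1 + x n) * hfun (x n))) atTop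
      (𝓝 (-u^2/4)) := by
    have := hnx2.mul hg'
    convert this using 2
    ring
  have hElim : Tendsto E atTop (𝓝 (Real.exp (-u^2/4))) := by
    rw [hE_def]
    apply (Real.continuous_exp.tendsto _).comp
    apply hexpo.congr'
    filter_upwards [hbZ] with n hn
    obtain ⟨hb1, hm1, h3, h4, h5⟩ := hn
    have hn0 : (0:ℝ) < n := by exact_mod_cast h5
    have hb0 : (0:ℝ) < b n := by exact_mod_cast h4
    have hbR : ((b n : ℕ) : ℝ) = (n:ℝ) + K n := by
      have := congrArg (fun z : ℤ => (z:ℝ)) hb1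
      push_cast at this
      rw [this]
    have hmR : ((m n : ℕ) : ℝ) = 2*(n:ℝ) + K n := by
      have := congrArg (fun z : ℤ => (z:ℝ)) hm1
      push_cast at this
      rw [this]
    have hKn : K n = x n * n := by
      simp only [hx_def]; field_simp
    have h1x : (0:ℝ) < 1 + x n := by
      have hq : (1 + x n) * (n:ℝ) = (b n : ℝ) := by rw [hbR, hKn]; ring
      nlinarith [hb0, hn0, hq]
    have h1x2 : (0:ℝ) < 1 + x n / 2 := by linarith
    have hm2 : ((m n : ℕ) : ℝ)/2 = (n:ℝ) * (1 + x n / 2) := by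
      rw [hmR, hKn]; ring
    have hbb : ((b n : ℕ) : ℝ) = (n:ℝ) * (1 + x n) := by
      rw [hbR, hKn]; ring
    symm
    rw [hm2, hbb, Real.log_mul (ne_of_gt hn0) (ne_of_gt h1x2),
      Real.log_mul (ne_of_gt hn0) (ne_of_gt h1x),
      log_one_add_eq (x n / 2), log_one_add_eq (x n), hmR, hKn]
    ring
  -- the master pointwise identity
  have hmain : ∀ᶠ n : ℕ in atTop, Fbin n u = A n * B n * E n := by
    filter_upwards [hbZ] with n hn
    obtain ⟨hb1, hm1, h3, h4, h5⟩ := hn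
    have hn0 : (0:ℝ) < n := by exact_mod_cast h5
    have hb0 : (0:ℝ) < b n := by exact_mod_cast h4
    have hnb1 : 1 ≤ n + b n := by omega
    have hnb0 : (0:ℝ) < ((n + b n : ℕ) : ℝ) := by exact_mod_cast hnb1
    have hEeq : E n = (((n + b n : ℕ):ℝ)/2)^(n + b n) / ((n:ℝ)^n * ((b n:ℕ):ℝ)^(b n)) := by
      simp only [hE_def]
      rw [h3, sub_sub, Real.exp_sub, Real.exp_add,
        exp_nat_mul_log (show (0:ℝ) < ((n + b n : ℕ):ℝ)/2 by linarith) (n + b n),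
        exp_nat_mul_log hn0 n, exp_nat_mul_log hb0 (b n)]
    rw [show Fbin n u = ((m n).choose n : ℝ) * Real.sqrt n / 2^(m n) from rfl]
    rw [hEeq]
    simp only [hA_def, hB_def, hS_def]
    rw [h3]
    rw [Nat.cast_choose ℝ (Nat.le_add_right n (b n)), Nat.add_sub_cancel_left]
    rw [fact_stirling h5, fact_stirling h4, fact_stirling hnb1]
    exact master_alg (Stirling.stirlingSeq n) (Stirling.stirlingSeq (b n))
      (Stirling.stirlingSeq (n + b n)) n (b n) hn0 hb0
      (ne_of_gt (stirling_pos h5)) (ne_of_gt (stirling_pos h4))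
  -- assemble
  have hABE : Tendsto (fun n : ℕ => A n * B n * E n) atTop
      (𝓝 (Real.sqrt π / (Real.sqrt π * Real.sqrt π) * 1 * Real.exp (-u^2/4))) :=
    (hA.mul hBlim).mul hElim
  have hval : Real.sqrt π / (Real.sqrt π * Real.sqrt π) * 1 * Real.exp (-u^2/4)
      = Real.exp (-u^2/4) / Real.sqrt π := by
    field_simp
  rw [hval] at hABE
  have hmain' : (fun n : ℕ => Fbin n u) =ᶠ[atTop] fun n => A n * B n * E n := hmain
  exact hABE.congr' hmain'.symm
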